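/- The map (k, j) ↦ γ(k,j) := ι_I⁻¹(3·ι_{ᵏI*}(j) + ι₃(k) − (3,…,3)), defined on pairs with k ∈ {1,…,3^d} and j ∈ {1,…,∏_w ⌊(I_w − ι₃(k)_w + 3)/3⌋}, is a bijection onto {1,…,∏_w I_w}. Hence every cell belongs to exactly one checkerboard pattern. -/

import Mathlib

def prodIio {d : ℕ} (I : Fin d → ℕ) (l : Fin d) : ℕ := ∏ t ∈ Finset.Iio l, I t

/-- vectorial index of a scalar index `j` (mixed-radix digits, offset by 1). -/
def iotaVec {d : ℕ} (I : Fin d → ℕ) (j : ℕ) (l : Fin d) : ℕ :=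
  if l.val = d - 1 then (j - 1) / prodIio I l + 1
  else (j - 1) / prodIio I l - (j - 1) / (prodIio I l * I l) * I l + 1

/-- scalar index of a vectorial index. -/
def iotaInv {d : ℕ} (I : Fin d → ℕ) (v : Fin d → ℕ) : ℕ :=
  1 + ∑ l, (v l - 1) * prodIio I l

def iota3 (d : ℕ) (k : ℕ) : Fin d → ℕ := iotaVec (fun _ => 3) k

def kIstar {d : ℕ} (I : Fin d → ℕ) (k : ℕ) (w : Fin d) : ℕ := (I w + 3 - iota3 d k w) / 3

def gamma {d : ℕ} (I : Fin d → ℕ) (k j : ℕ) : ℕ :=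
  iotaInv I (fun w => 3 * iotaVec (kIstar I k) j w + iota3 d k w - 3)

def betaVec {d : ℕ} (I : Fin d → ℕ) (t l : ℕ) (w : Fin d) : ℕ :=
  iotaVec I t w + iota3 d l w - 2

def betaDef {d : ℕ} (I : Fin d → ℕ) (t l : ℕ) : Prop :=
  ∀ w, 1 ≤ betaVec I t l w ∧ betaVec I t l w ≤ I w

def beta {d : ℕ} (I : Fin d → ℕ) (t l : ℕ) : ℕ := iotaInv I (betaVec I t l)


namespace S9
variable {d : ℕ}

def J (I : Fin d → ℕ) (t : ℕ) : ℕ := if h : t < d then I ⟨t, h⟩ else 1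

def Q (I : Fin d → ℕ) (m : ℕ) : ℕ := ∏ t ∈ Finset.range m, J I t

lemma J_val (I : Fin d → ℕ) (l : Fin d) : J I l.val = I l := by
  simp [J, l.isLt]

lemma J_pos {I : Fin d → ℕ} (hI : ∀ w, 1 ≤ I w) (t : ℕ) : 1 ≤ J I t := by
  unfold J; split
  · exact hI _
  · exact le_refl 1

lemma Q_succ (I : Fin d → ℕ) (m : ℕ) : Q I (m+1) = Q I m * J I m :=
  Finset.prod_range_succ _ _

lemma Q_pos {I : Fin d → ℕ} (hI : ∀ w, 1 ≤ I w) (m : ℕ) : 0 < Q I m :=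
  Finset.prod_pos fun t _ => J_pos hI t

lemma prodIio_eq (I : Fin d → ℕ) (l : Fin d) : prodIio I l = Q I l.val := by
  unfold prodIio Q
  rw [show Finset.range l.val = Finset.Iio l.val from (Nat.Iio_eq_range _).symm,
    ← Fin.map_valEmbedding_Iio, Finset.prod_map]
  exact Finset.prod_congr rfl fun t _ => (J_val I t).symm

lemma prod_univ_eq (I : Fin d → ℕ) : ∏ w, I w = Q I d := by
  rw [show (∏ w, I w) = ∏ w : Fin d, J I w.val from
    Finset.prod_congr rfl fun w _ => (J_val I w).symm]
  exact Fin.prod_univ_eq_prod_range (J I) d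

lemma mod_mul_add (n a b : ℕ) : n % (a * b) = n % a + a * (n / a % b) := by
  conv_lhs => rw [← Nat.div_add_mod (n % (a*b)) a]
  rw [Nat.mod_mul_right_div_self, Nat.mod_mod_of_dvd n (dvd_mul_right a b)]
  omega

def dig (I : Fin d → ℕ) (n m : ℕ) : ℕ := n / Q I m % J I m

lemma recon (I : Fin d → ℕ) (n : ℕ) (M : ℕ) :
    ∑ t ∈ Finset.range M, dig I n t * Q I t = n % Q I M := by
  induction M with
  | zero => simp [Q, Nat.mod_one]
  | succ M ih =>
    rw [Finset.sum_range_succ, ih, Q_succ, mod_mul_add n (Q I M) (J I M)]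
    simp [dig, Nat.mul_comm]

lemma sum_lt {I : Fin d → ℕ} (_hI : ∀ w, 1 ≤ I w) (c : ℕ → ℕ) (M : ℕ)
    (h : ∀ t < M, c t < J I t) : ∑ t ∈ Finset.range M, c t * Q I t < Q I M := by
  induction M with
  | zero => simp [Q]
  | succ M ih =>
    rw [Finset.sum_range_succ, Q_succ]
    have h1 := ih (fun t ht => h t (by omega))
    have h2 : c M + 1 ≤ J I M := h M (by omega)
    have h3 : (c M + 1) * Q I M ≤ J I M * Q I M := Nat.mul_le_mul_right _ h2
    have h4 : (c M + 1) * Q I M = c M * Q I M + Q I M := by ring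
    have h5 : Q I M * J I M = J I M * Q I M := Nat.mul_comm _ _
    omega

lemma dig_inv {I : Fin d → ℕ} (hI : ∀ w, 1 ≤ I w) (c : ℕ → ℕ)
    (hc : ∀ t < d, c t < J I t) (m : ℕ) (hm : m < d) :
    dig I (∑ t ∈ Finset.range d, c t * Q I t) m = c m := by
  set R := ∑ t ∈ Finset.Ico (m+1) d, c t * ∏ s ∈ Finset.Ico (m+1) t, J I s with hR
  have hQt : ∀ t, m + 1 ≤ t → Q I t = Q I (m+1) * ∏ s ∈ Finset.Ico (m+1) t, J I s := by
    intro t ht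
    unfold Q
    rw [Finset.range_eq_Ico, Finset.range_eq_Ico]
    exact (Finset.prod_Ico_consecutive (J I) (Nat.zero_le (m+1)) ht).symm
  have hsplit : ∑ t ∈ Finset.range d, c t * Q I t
      = (∑ t ∈ Finset.range m, c t * Q I t) + c m * Q I m + Q I (m+1) * R := by
    rw [hR, Finset.mul_sum]
    rw [Finset.range_eq_Ico, ← Finset.sum_Ico_consecutive _ (Nat.zero_le (m+1)) hm,
      ← Finset.range_eq_Ico, Finset.sum_range_succ]
    congr 1
    apply Finset.sum_congr rfl
    intro t ht
    rw [Finset.mem_Ico] at ht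
    rw [hQt t ht.1]; ring
  have hA : (∑ t ∈ Finset.range m, c t * Q I t) < Q I m :=
    sum_lt hI c m (fun t ht => hc t (by omega))
  unfold dig
  rw [hsplit, Q_succ]
  have hQpos := Q_pos hI m
  have e1 : (∑ t ∈ Finset.range m, c t * Q I t) + c m * Q I m + Q I m * J I m * R
      = (∑ t ∈ Finset.range m, c t * Q I t) + Q I m * (c m + J I m * R) := by ring
  rw [e1, Nat.add_mul_div_left _ _ hQpos, Nat.div_eq_of_lt hA, Nat.zero_add,
    Nat.add_mul_mod_self_left]
  exact Nat.mod_eq_of_lt (hc m hm)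

lemma iotaVec_eq {I : Fin d → ℕ} (hI : ∀ w, 1 ≤ I w) {j : ℕ} (hj : j ≤ ∏ w, I w)
    (l : Fin d) : iotaVec I j l = dig I (j - 1) l.val + 1 := by
  unfold iotaVec dig
  rw [prodIio_eq, J_val]
  split
  · next h =>
    have hd0 : 0 < d := l.pos
    have h1 : j - 1 < Q I d := by
      have := Q_pos hI d
      rw [prod_univ_eq] at hj
      omega
    have h2 : Q I d = Q I l.val * I l := by
      calc Q I d = Q I (l.val + 1) := congrArg (Q I) (by omega)
        _ = Q I l.val * I l := by rw [Q_succ, J_val]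
    have hlt : (j-1) / Q I l.val < I l := by
      rw [Nat.div_lt_iff_lt_mul (Q_pos hI l.val)]
      have h3 : I l * Q I l.val = Q I l.val * I l := Nat.mul_comm _ _
      omega
    rw [Nat.mod_eq_of_lt hlt]
  · rw [← Nat.div_div_eq_div_mul]
    set q := (j-1) / Q I l.val
    have := Nat.div_add_mod q (I l)
    have h2 : q / I l * I l = I l * (q / I l) := Nat.mul_comm _ _
    omega

def cdig (v : Fin d → ℕ) (t : ℕ) : ℕ := if h : t < d then v ⟨t, h⟩ - 1 else 0

lemma sum_cdig (I : Fin d → ℕ) (v : Fin d → ℕ) :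
    ∑ l, (v l - 1) * prodIio I l = ∑ t ∈ Finset.range d, cdig v t * Q I t := by
  rw [show (∑ l, (v l - 1) * prodIio I l) = ∑ l : Fin d, cdig v l.val * Q I l.val from
    Finset.sum_congr rfl fun (l : Fin d) _ => by simp [cdig, l.isLt, prodIio_eq]]
  exact Fin.sum_univ_eq_sum_range (fun t => cdig v t * Q I t) d

lemma cdig_lt {I v : Fin d → ℕ} (hI : ∀ w, 1 ≤ I w) (hv : ∀ w, 1 ≤ v w ∧ v w ≤ I w) :
    ∀ t < d, cdig v t < J I t := by
  intro t ht
  simp only [cdig, J, dif_pos ht]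
  have := hv ⟨t, ht⟩
  have := hI ⟨t, ht⟩
  omega

lemma iotaInv_iotaVec {I : Fin d → ℕ} (hI : ∀ w, 1 ≤ I w) {j : ℕ} (h1 : 1 ≤ j)
    (h2 : j ≤ ∏ w, I w) : iotaInv I (iotaVec I j) = j := by
  unfold iotaInv
  rw [show (∑ l, (iotaVec I j l - 1) * prodIio I l)
      = ∑ l : Fin d, dig I (j-1) l.val * Q I l.val from
    Finset.sum_congr rfl fun (l : Fin d) _ => by rw [iotaVec_eq hI h2, prodIio_eq]; simp]
  rw [Fin.sum_univ_eq_sum_range (fun t => dig I (j-1) t * Q I t) d, recon]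
  have := Q_pos hI d
  rw [prod_univ_eq] at h2
  rw [Nat.mod_eq_of_lt (by omega)]
  omega

lemma iotaVec_mem {I : Fin d → ℕ} (hI : ∀ w, 1 ≤ I w) {j : ℕ} (h2 : j ≤ ∏ w, I w)
    (l : Fin d) : 1 ≤ iotaVec I j l ∧ iotaVec I j l ≤ I l := by
  rw [iotaVec_eq hI h2]
  have h3 : dig I (j-1) l.val < J I l.val := Nat.mod_lt _ (J_pos hI l.val)
  rw [J_val] at h3
  omega

lemma iotaInv_mem {I : Fin d → ℕ} (hI : ∀ w, 1 ≤ I w) {v : Fin d → ℕ}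
    (hv : ∀ w, 1 ≤ v w ∧ v w ≤ I w) : 1 ≤ iotaInv I v ∧ iotaInv I v ≤ ∏ w, I w := by
  unfold iotaInv
  refine ⟨by omega, ?_⟩
  rw [sum_cdig, prod_univ_eq]
  have := sum_lt hI (cdig v) d (cdig_lt hI hv)
  omega

lemma iotaVec_iotaInv {I : Fin d → ℕ} (hI : ∀ w, 1 ≤ I w) {v : Fin d → ℕ}
    (hv : ∀ w, 1 ≤ v w ∧ v w ≤ I w) : iotaVec I (iotaInv I v) = v := by
  funext l
  have hmem := iotaInv_mem hI hv
  rw [iotaVec_eq hI hmem.2]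
  have : iotaInv I v - 1 = ∑ t ∈ Finset.range d, cdig v t * Q I t := by
    unfold iotaInv; rw [sum_cdig]; omega
  rw [this, dig_inv hI (cdig v) (cdig_lt hI hv) l.val l.isLt]
  simp only [cdig, dif_pos l.isLt]
  have := (hv l).1
  simp only [Fin.eta]
  omega

end S9

namespace S9
variable {d : ℕ}

lemma prod_three (d : ℕ) : (∏ _w : Fin d, (3:ℕ)) = 3 ^ d := by
  simp [Finset.prod_const, Finset.card_univ]

lemma iota3_mem {k : ℕ} (hk2 : k ≤ 3 ^ d) (w : Fin d) :
    1 ≤ iota3 d k w ∧ iota3 d k w ≤ 3 := by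
  unfold iota3
  exact iotaVec_mem (fun _ => by norm_num) (by rw [prod_three]; exact hk2) w

lemma kIstar_pos {I : Fin d → ℕ} {k j : ℕ} (hj1 : 1 ≤ j)
    (hj2 : j ≤ ∏ w, kIstar I k w) (w : Fin d) : 1 ≤ kIstar I k w := by
  by_contra h
  have h0 : kIstar I k w = 0 := by omega
  have : (∏ w, kIstar I k w) = 0 := Finset.prod_eq_zero (Finset.mem_univ w) h0
  omega

lemma gamma_vec_mem {I : Fin d → ℕ} (hI : ∀ w, 1 ≤ I w) {k j : ℕ} (hk2 : k ≤ 3 ^ d)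
    (hj1 : 1 ≤ j) (hj2 : j ≤ ∏ w, kIstar I k w) (w : Fin d) :
    1 ≤ 3 * iotaVec (kIstar I k) j w + iota3 d k w - 3 ∧
      3 * iotaVec (kIstar I k) j w + iota3 d k w - 3 ≤ I w := by
  have hb := iotaVec_mem (kIstar_pos hj1 hj2) hj2 w
  have ha := iota3_mem hk2 w
  have hMle : kIstar I k w * 3 ≤ I w + 3 - iota3 d k w := Nat.div_mul_le_self _ _
  have hI' := hI w
  omega

end S9

theorem stmt9 (d : ℕ) (hd : 1 ≤ d) (I : Fin d → ℕ) (hI : ∀ w, 1 ≤ I w) :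
    Set.BijOn (fun p : ℕ × ℕ => gamma I p.1 p.2)
      {p : ℕ × ℕ | (1 ≤ p.1 ∧ p.1 ≤ 3 ^ d) ∧ 1 ≤ p.2 ∧ p.2 ≤ ∏ w, kIstar I p.1 w}
      (Set.Icc 1 (∏ w, I w)) := by
  have h3 : ∀ w : Fin d, 1 ≤ (fun _ : Fin d => (3:ℕ)) w := fun _ => by norm_num
  refine ⟨?_, ?_, ?_⟩
  · -- MapsTo
    rintro ⟨k, j⟩ ⟨⟨hk1, hk2⟩, hj1, hj2⟩
    have := S9.iotaInv_mem hI (S9.gamma_vec_mem hI hk2 hj1 hj2)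
    exact Set.mem_Icc.mpr this
  · -- InjOn
    rintro ⟨k, j⟩ ⟨⟨hk1, hk2⟩, hj1, hj2⟩ ⟨k', j'⟩ ⟨⟨hk1', hk2'⟩, hj1', hj2'⟩ heq
    simp only at heq hk1 hk2 hj1 hj2 hk1' hk2' hj1' hj2'
    have h1 : (fun w => 3 * iotaVec (kIstar I k) j w + iota3 d k w - 3)
        = (fun w => 3 * iotaVec (kIstar I k') j' w + iota3 d k' w - 3) := by
      have e1 := S9.iotaVec_iotaInv hI (S9.gamma_vec_mem hI hk2 hj1 hj2)
      have e2 := S9.iotaVec_iotaInv hI (S9.gamma_vec_mem hI hk2' hj1' hj2')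
      rw [← e1, ← e2]
      unfold gamma at heq
      rw [heq]
    have key : ∀ w, iota3 d k w = iota3 d k' w ∧
        iotaVec (kIstar I k) j w = iotaVec (kIstar I k') j' w := by
      intro w
      have h2 := congrFun h1 w
      have ha1 := S9.iota3_mem hk2 w
      have ha2 := S9.iota3_mem hk2' w
      have hb1 := S9.iotaVec_mem (S9.kIstar_pos hj1 hj2) hj2 w
      have hb2 := S9.iotaVec_mem (S9.kIstar_pos hj1' hj2') hj2' w
      omega
    have hkk : k = k' := by
      have e1 : iotaInv (fun _ : Fin d => 3) (iota3 d k) = k :=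
        S9.iotaInv_iotaVec h3 hk1 (by rw [S9.prod_three]; exact hk2)
      have e2 : iotaInv (fun _ : Fin d => 3) (iota3 d k') = k' :=
        S9.iotaInv_iotaVec h3 hk1' (by rw [S9.prod_three]; exact hk2')
      rw [← e1, ← e2, funext fun w => (key w).1]
    subst hkk
    have hjj : j = j' := by
      have e1 : iotaInv (kIstar I k) (iotaVec (kIstar I k) j) = j :=
        S9.iotaInv_iotaVec (S9.kIstar_pos hj1 hj2) hj1 hj2
      have e2 : iotaInv (kIstar I k) (iotaVec (kIstar I k) j') = j' :=
        S9.iotaInv_iotaVec (S9.kIstar_pos hj1' hj2') hj1' hj2'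
      rw [← e1, ← e2, funext fun w => (key w).2]
    rw [hjj]
  · -- SurjOn
    intro n hn
    obtain ⟨hn1, hn2⟩ := Set.mem_Icc.mp hn
    have hv := fun w => S9.iotaVec_mem hI hn2 w
    set v : Fin d → ℕ := iotaVec I n with hvdef
    set a : Fin d → ℕ := fun w => (v w - 1) % 3 + 1 with hadef
    have ha : ∀ w, 1 ≤ a w ∧ a w ≤ 3 := fun w => by
      constructor <;> simp [hadef] <;> omega
    set k := iotaInv (fun _ : Fin d => 3) a with hkdef
    have hk : 1 ≤ k ∧ k ≤ 3 ^ d := by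
      have := S9.iotaInv_mem h3 ha
      rwa [S9.prod_three] at this
    have hia : iota3 d k = a := S9.iotaVec_iotaInv h3 ha
    set b : Fin d → ℕ := fun w => (v w + 3 - a w) / 3 with hbdef
    have hb : ∀ w, 1 ≤ b w ∧ b w ≤ kIstar I k w := by
      intro w
      have hA : a w = (v w - 1) % 3 + 1 := rfl
      have hB : b w = (v w + 3 - a w) / 3 := rfl
      have hM : kIstar I k w = (I w + 3 - a w) / 3 := by unfold kIstar; rw [hia]
      have h1 := hv w
      omega
    have hM1 : ∀ w, 1 ≤ kIstar I k w := fun w => le_trans (hb w).1 (hb w).2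
    set j := iotaInv (kIstar I k) b with hjdef
    have hj := S9.iotaInv_mem hM1 hb
    refine ⟨(k, j), ⟨hk, hj⟩, ?_⟩
    show gamma I k j = n
    unfold gamma
    have hvb : iotaVec (kIstar I k) j = b := S9.iotaVec_iotaInv hM1 hb
    rw [hvb, hia]
    have hfv : (fun w => 3 * b w + a w - 3) = v := by
      funext w
      have hA : a w = (v w - 1) % 3 + 1 := rfl
      have hB : b w = (v w + 3 - a w) / 3 := rfl
      have h1 := hv w
      omega
    rw [hfv, hvdef]
    exact S9.iotaInv_iotaVec hI hn1 hn2
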